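/- arXiv:2211.01687 — 4 statements merged into one kernel-verified Lean document; each statement's English description precedes it below -/
import Mathlib

section
/- For any n-player binary game G, every quantum equilibrium induces a correlation lying in Q_corr(G). Precisely: if (M, ρ) is a quantum equilibrium for G with induced distribution P(a|t) = tr[ρ · ⨂_i M^{(i)}_{a_i|t_i}], then P is a quantum correlation and the canonical solution (id_T, id_A, P) is a Nash equilibrium for G. Consequently Q(G) ⊆ Q_corr(G). -/
open scoped BigOperators ComplexOrder

namespace QG

noncomputable section

variable {n : ℕ}

/-- Combine a value for player `i` with values for the other players,
producing a full profile. -/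
def merge {α : Fin n → Type*} (i : Fin n) (x : α i)
    (y : ∀ j : {j : Fin n // j ≠ i}, α j.1) : ∀ j, α j :=
  fun j => if h : j = i then cast (congrArg α h.symm) x else y ⟨j, h⟩

/-- `merge` specialised to Boolean profiles (questions and answers). -/
def mergeB (i : Fin n) (x : Bool) (y : ∀ _ : {j : Fin n // j ≠ i}, Bool) :
    Fin n → Bool :=
  merge (α := fun _ => Bool) i x y

/-- The trace of `ρ` multiplied by the tensor product of the matrices `N i`,
where the tensor product has entries `(⨂ᵢ Nᵢ)(x, y) = ∏ i, Nᵢ (x i) (y i)`. -/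
def tensorTrace {d : Fin n → ℕ}
    (ρ : Matrix (∀ i, Fin (d i)) (∀ i, Fin (d i)) ℂ)
    (N : ∀ i, Matrix (Fin (d i)) (Fin (d i)) ℂ) : ℂ :=
  Matrix.trace (ρ * Matrix.of fun x y => ∏ i, N i (x i) (y i))

/-- A quantum correlation over inputs `∀ i, R i` and outputs `∀ i, S i`:
it is realized by a density matrix `ρ` and POVMs `{M i r s}ₛ` for each player `i`
and input `r`. -/
def IsQuantumCorrelation {R S : Fin n → Type*} [∀ i, Fintype (S i)]
    (C : (∀ i, S i) → (∀ i, R i) → ℝ) : Prop :=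
  ∃ (d : Fin n → ℕ) (ρ : Matrix (∀ i, Fin (d i)) (∀ i, Fin (d i)) ℂ)
    (M : ∀ i, R i → S i → Matrix (Fin (d i)) (Fin (d i)) ℂ),
    ρ.PosSemidef ∧ ρ.trace = 1 ∧
    (∀ i r s, (M i r s).PosSemidef) ∧ (∀ i r, ∑ s, M i r s = 1) ∧
    ∀ s r, (C s r : ℂ) = tensorTrace ρ fun i => M i (r i) (s i)

/-- An `n`-player binary game: a nonempty set of valid questions `valid ⊆ {0,1}ⁿ`,
a prior distribution on questions supported on `valid`, and a payoff function
for each player (answers and questions are elements of `Fin n → Bool`). -/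
structure Game (n : ℕ) where
  valid : Set (Fin n → Bool)
  valid_nonempty : valid.Nonempty
  prior : (Fin n → Bool) → ℝ
  prior_nonneg : ∀ t, 0 ≤ prior t
  prior_sum_one : ∑ t, prior t = 1
  prior_support : ∀ t, t ∉ valid → prior t = 0
  payoff : Fin n → (Fin n → Bool) → (Fin n → Bool) → ℝ

/-- A solution for an `n`-player binary game: a correlation `C` over inputs
`∀ i, R i` and outputs `∀ i, S i`, and, for each player, a mixed strategy
given by a distribution `pdist i` on a finite set `Λ i` and functions
`f i : Bool → Λ i → R i` and `g i : Bool → S i → Λ i → Bool`. -/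
structure Solution (n : ℕ) where
  R : Fin n → Type
  S : Fin n → Type
  Λ : Fin n → Type
  [instR : ∀ i, Fintype (R i)]
  [instS : ∀ i, Fintype (S i)]
  [instΛ : ∀ i, Fintype (Λ i)]
  [instDecS : ∀ i, DecidableEq (S i)]
  C : (∀ i, S i) → (∀ i, R i) → ℝ
  C_nonneg : ∀ s r, 0 ≤ C s r
  C_sum_one : ∀ r, ∑ s, C s r = 1
  pdist : ∀ i, Λ i → ℝ
  pdist_nonneg : ∀ i l, 0 ≤ pdist i l
  pdist_sum_one : ∀ i, ∑ l, pdist i l = 1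
  f : ∀ i, Bool → Λ i → R i
  g : ∀ i, Bool → S i → Λ i → Bool

attribute [instance] Solution.instR Solution.instS Solution.instΛ Solution.instDecS

/-- The probability distribution on answers (given questions) induced by a solution:
`P(a|t) = Σ_{λ,s} C(s|f(t,λ)) π(λ) [g(t,s,λ) = a]`. -/
def Solution.induced (sol : Solution n) (a t : Fin n → Bool) : ℝ :=
  ∑ l : ∀ i, sol.Λ i, ∑ s : ∀ i, sol.S i,
    sol.C s (fun i => sol.f i (t i) (l i)) * (∏ i, sol.pdist i (l i)) *
      (if (fun i => sol.g i (t i) (s i) (l i)) = a then 1 else 0)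

/-- Nash equilibrium condition for a solution: no player `i` can improve their
expected payoff by, for any type `ti`, sending an alternative input `ri` to the
mediator and applying a deterministic function `μ` to the received advice. -/
def Solution.IsNashEq (sol : Solution n) (G : Game n) : Prop :=
  ∀ (i : Fin n) (ti : Bool) (ri : sol.R i) (μ : Bool → sol.S i → Bool),
    (∑ tm : ∀ _ : {j : Fin n // j ≠ i}, Bool, ∑ l : ∀ j, sol.Λ j, ∑ s : ∀ j, sol.S j,
      G.payoff i (fun j => sol.g j (mergeB i ti tm j) (s j) (l j)) (mergeB i ti tm) *
        sol.C s (fun j => sol.f j (mergeB i ti tm j) (l j)) *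
        G.prior (mergeB i ti tm) * ∏ j, sol.pdist j (l j))
    ≥ ∑ tm : ∀ _ : {j : Fin n // j ≠ i}, Bool, ∑ l : ∀ j, sol.Λ j, ∑ s : ∀ j, sol.S j,
      G.payoff i (mergeB i (μ ti (s i)) fun j => sol.g j.1 (tm j) (s j.1) (l j.1))
          (mergeB i ti tm) *
        sol.C s (merge i ri fun j => sol.f j.1 (tm j) (l j.1)) *
        G.prior (mergeB i ti tm) * ∏ j, sol.pdist j (l j)

/-- Nash equilibrium condition for the canonical solution `(id_T, id_A, P)` of a
distribution `P`: for every player `i`, types `ti, ri` and every deterministic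
function `μ`, `Σ_{t₋ᵢ,a} uᵢ(a,t) P(a|t) Π(t) ≥ Σ_{t₋ᵢ,a} uᵢ((μ(tᵢ,aᵢ),a₋ᵢ),t) P(a|(rᵢ,t₋ᵢ)) Π(t)`. -/
def CanonicalNashEq (G : Game n) (P : (Fin n → Bool) → (Fin n → Bool) → ℝ) : Prop :=
  ∀ (i : Fin n) (ti ri : Bool) (μ : Bool → Bool → Bool),
    (∑ tm : ∀ _ : {j : Fin n // j ≠ i}, Bool, ∑ a : Fin n → Bool,
      G.payoff i a (mergeB i ti tm) * P a (mergeB i ti tm) * G.prior (mergeB i ti tm))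
    ≥ ∑ tm : ∀ _ : {j : Fin n // j ≠ i}, Bool, ∑ a : Fin n → Bool,
      G.payoff i (Function.update a i (μ ti (a i))) (mergeB i ti tm) *
        P a (mergeB i ri tm) * G.prior (mergeB i ti tm)


lemma mergeB_same (i : Fin n) (x : Bool) (y : ∀ _ : {j : Fin n // j ≠ i}, Bool) :
    mergeB i x y i = x := by
  simp [mergeB, merge]

lemma mergeB_ne {i j : Fin n} (h : j ≠ i) (x : Bool) (y : ∀ _ : {j : Fin n // j ≠ i}, Bool) :
    mergeB i x y j = y ⟨j, h⟩ := by
  simp [mergeB, merge, h]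

lemma tensorTrace_real {d : Fin n → ℕ} (ρ : Matrix (∀ i, Fin (d i)) (∀ i, Fin (d i)) ℂ)
    (N : ∀ i, Matrix (Fin (d i)) (Fin (d i)) ℂ)
    (hρ : ρ.IsHermitian) (hN : ∀ i, (N i).IsHermitian) :
    ((tensorTrace ρ N).re : ℂ) = tensorTrace ρ N := by
  rw [← Complex.conj_eq_iff_re]
  have hB : Matrix.conjTranspose
      (Matrix.of fun (x y : ∀ i, Fin (d i)) => ∏ i, N i (x i) (y i))
      = Matrix.of fun (x y : ∀ i, Fin (d i)) => ∏ i, N i (x i) (y i) := by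
    ext x y
    simp only [Matrix.conjTranspose_apply, Matrix.of_apply, star_prod]
    exact Finset.prod_congr rfl fun i _ => (hN i).apply (x i) (y i)
  show star (tensorTrace ρ N) = tensorTrace ρ N
  unfold tensorTrace
  rw [← Matrix.trace_conjTranspose, Matrix.conjTranspose_mul, hB, hρ.eq,
    Matrix.trace_mul_comm]

lemma prod_update_apply {d : Fin n → ℕ} (F : ∀ i, Matrix (Fin (d i)) (Fin (d i)) ℂ)
    (i : Fin n) (A : Matrix (Fin (d i)) (Fin (d i)) ℂ) (x y : ∀ i, Fin (d i)) :
    ∏ j, (Function.update F i A) j (x j) (y j)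
      = A (x i) (y i) * ∏ j ∈ Finset.univ.erase i, F j (x j) (y j) := by
  have h : (fun j => (Function.update F i A) j (x j) (y j))
      = Function.update (fun j => F j (x j) (y j)) i (A (x i) (y i)) := by
    funext j
    rcases eq_or_ne j i with rfl | h
    · simp
    · simp [Function.update_of_ne h]
  rw [h, Finset.prod_update_of_mem (Finset.mem_univ i), Finset.erase_eq]

lemma tensorTrace_update_sum {d : Fin n → ℕ}
    (ρ : Matrix (∀ i, Fin (d i)) (∀ i, Fin (d i)) ℂ)
    (F : ∀ i, Matrix (Fin (d i)) (Fin (d i)) ℂ) (i : Fin n) {ι : Type*} (s : Finset ι)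
    (X : ι → Matrix (Fin (d i)) (Fin (d i)) ℂ) :
    tensorTrace ρ (Function.update F i (∑ c ∈ s, X c))
      = ∑ c ∈ s, tensorTrace ρ (Function.update F i (X c)) := by
  have hB : (Matrix.of fun x y => ∏ j, (Function.update F i (∑ c ∈ s, X c)) j (x j) (y j) :
      Matrix (∀ i, Fin (d i)) (∀ i, Fin (d i)) ℂ)
      = ∑ c ∈ s, Matrix.of fun x y => ∏ j, (Function.update F i (X c)) j (x j) (y j) := by
    ext x y
    simp [prod_update_apply, Matrix.sum_apply, Finset.sum_mul]
  rw [tensorTrace, hB, Matrix.mul_sum, Matrix.trace_sum]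
  rfl

def swapEq (i : Fin n) : ((Fin n → Bool) × Bool) ≃ ((Fin n → Bool) × Bool) where
  toFun p := (Function.update p.1 i p.2, p.1 i)
  invFun p := (Function.update p.1 i p.2, p.1 i)
  left_inv p := by simp [Function.update_idem]
  right_inv p := by simp [Function.update_idem]

/-- If `(M, ρ)` is a quantum equilibrium for the `n`-player binary
game `G`, then the induced distribution `P(a|t) = tr[ρ ⨂ᵢ M i (tᵢ) (aᵢ)]` is a
quantum correlation and its canonical solution `(id_T, id_A, P)` is a Nash
equilibrium for `G`; consequently `Q(G) ⊆ Q_corr(G)`. -/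
theorem quantum_equilibrium_mem_Qcorr (G : Game n) (d : Fin n → ℕ)
    (ρ : Matrix (∀ i, Fin (d i)) (∀ i, Fin (d i)) ℂ)
    (M : ∀ i, Bool → Bool → Matrix (Fin (d i)) (Fin (d i)) ℂ)
    (hρ : ρ.PosSemidef) (hρtr : ρ.trace = 1)
    (hMpsd : ∀ i t a, (M i t a).PosSemidef) (hMsum : ∀ i t, ∑ a, M i t a = 1)
    -- `(M, ρ)` is a quantum equilibrium: no player can improve their expected
    -- payoff by replacing, for any of their types, their POVM by another POVM `N`.
    (hQeq : ∀ (i : Fin n) (ti : Bool) (N : Bool → Matrix (Fin (d i)) (Fin (d i)) ℂ),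
      (∀ a, (N a).PosSemidef) → (∑ a, N a = 1) →
      (∑ tm : ∀ _ : {j : Fin n // j ≠ i}, Bool, ∑ a : Fin n → Bool,
        G.payoff i a (mergeB i ti tm) *
          (tensorTrace ρ fun j => M j (mergeB i ti tm j) (a j)).re *
          G.prior (mergeB i ti tm))
      ≥ ∑ tm : ∀ _ : {j : Fin n // j ≠ i}, Bool, ∑ a : Fin n → Bool,
        G.payoff i a (mergeB i ti tm) *
          (tensorTrace ρ
            (Function.update (fun j => M j (mergeB i ti tm j) (a j)) i (N (a i)))).re *
          G.prior (mergeB i ti tm)) :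
    IsQuantumCorrelation
      (fun a t : Fin n → Bool => (tensorTrace ρ fun j => M j (t j) (a j)).re) ∧
    CanonicalNashEq G
      (fun a t : Fin n → Bool => (tensorTrace ρ fun j => M j (t j) (a j)).re) := by
  constructor
  · exact ⟨d, ρ, M, hρ, hρtr, hMpsd, hMsum, fun s r =>
      tensorTrace_real ρ _ hρ.1 fun j => (hMpsd j (r j) (s j)).1⟩
  · intro i ti ri μ
    set N : Bool → Matrix (Fin (d i)) (Fin (d i)) ℂ :=
      fun b => ∑ c, if μ ti c = b then M i ri c else 0 with hN
    have hpsd : ∀ b, (N b).PosSemidef := by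
      intro b
      refine Finset.sum_induction _ _ (fun A B hA hB => hA.add hB) Matrix.PosSemidef.zero ?_
      intro c _
      split
      · exact hMpsd i ri c
      · exact Matrix.PosSemidef.zero
    have hsum : ∑ b, N b = 1 := by
      simp only [hN]
      rw [Finset.sum_comm]
      simp only [Finset.sum_ite_eq, Finset.mem_univ, if_true]
      exact hMsum i ri
    have h := hQeq i ti N hpsd hsum
    refine le_trans (le_of_eq ?_) h
    refine Finset.sum_congr rfl fun tm _ => ?_
    have key : ∀ (a : Fin n → Bool) (c : Bool),
        (Function.update (fun j => M j (mergeB i ti tm j) (a j)) i (M i ri c))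
          = fun j => M j (mergeB i ri tm j) (Function.update a i c j) := by
      intro a c; funext j
      rcases eq_or_ne j i with rfl | hj
      · simp [mergeB_same]
      · simp [Function.update_of_ne hj, mergeB_ne hj]
    have expand : ∀ a : Fin n → Bool,
        (tensorTrace ρ
            (Function.update (fun j => M j (mergeB i ti tm j) (a j)) i (N (a i)))).re
        = ∑ c : Bool, if μ ti c = a i
            then (tensorTrace ρ fun j =>
              M j (mergeB i ri tm j) (Function.update a i c j)).re
            else 0 := by
      intro a
      rw [show N (a i) = ∑ c : Bool, if μ ti c = a i then M i ri c else 0 from rfl,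
        tensorTrace_update_sum, Complex.re_sum]
      refine Finset.sum_congr rfl fun c _ => ?_
      by_cases hc : μ ti c = a i
      · rw [if_pos hc, if_pos hc, key a c]
      · rw [if_neg hc, if_neg hc]
        have h0 : tensorTrace ρ
            (Function.update (fun j => M j (mergeB i ti tm j) (a j)) i
              (0 : Matrix (Fin (d i)) (Fin (d i)) ℂ)) = 0 := by
          simpa using tensorTrace_update_sum ρ
            (fun j => M j (mergeB i ti tm j) (a j)) i (∅ : Finset Bool) fun _ : Bool => 0
        rw [h0]; simp
    calc (∑ a : Fin n → Bool,
            G.payoff i (Function.update a i (μ ti (a i))) (mergeB i ti tm) *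
              (tensorTrace ρ fun j => M j (mergeB i ri tm j) (a j)).re *
              G.prior (mergeB i ti tm))
        = ∑ p : (Fin n → Bool) × Bool,
            G.payoff i p.1 (mergeB i ti tm) *
              (if μ ti p.2 = p.1 i
                then (tensorTrace ρ fun j =>
                  M j (mergeB i ri tm j) (Function.update p.1 i p.2 j)).re
                else 0) * G.prior (mergeB i ti tm) := by
          rw [← Equiv.sum_comp (swapEq i) (fun p : (Fin n → Bool) × Bool =>
            G.payoff i p.1 (mergeB i ti tm) *
              (if μ ti p.2 = p.1 i
                then (tensorTrace ρ fun j =>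
                  M j (mergeB i ri tm j) (Function.update p.1 i p.2 j)).re
                else 0) * G.prior (mergeB i ti tm)), Fintype.sum_prod_type]
          refine Finset.sum_congr rfl fun b _ => Eq.symm ?_
          simp only [swapEq, Equiv.coe_fn_mk, Function.update_self, Function.update_idem,
            Function.update_eq_self, mul_ite, mul_zero, ite_mul, zero_mul,
            Finset.sum_ite_eq, Finset.mem_univ, if_true]
      _ = ∑ a : Fin n → Bool,
            G.payoff i a (mergeB i ti tm) *
              (tensorTrace ρ
                (Function.update (fun j => M j (mergeB i ti tm j) (a j)) i (N (a i)))).re *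
              G.prior (mergeB i ti tm) := by
          rw [Fintype.sum_prod_type]
          refine Finset.sum_congr rfl fun a _ => ?_
          rw [expand a, Finset.mul_sum, Finset.sum_mul]


end

end QG
end

section
/- Non-signalling correlations are closed under local classical pre- and post-processing: if C is a non-signalling correlation over inputs ∏_i R_i and outputs ∏_i S_i, and each player i uses a mixed local processing given by a probability distribution π_i on a finite set Λ_i and functions f_i : T_i × Λ_i → R_i, g_i : T_i × S_i × Λ_i → A_i, then the induced distribution P(a|t) = Σ_{λ, s} C(s | f(t,λ)) π(λ) [g(t,s,λ) = a] (with π(λ) = ∏_i π_i(λ_i) and f, g acting componentwise) is a non-signalling correlation over inputs ∏_i T_i and outputs ∏_i A_i. -/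
open scoped BigOperators

namespace QG

noncomputable section

variable {n : ℕ}

/-- A non-signalling (belief invariant) correlation: for any set `I` of players,
fixing the outputs on `I` and summing over the outputs of the complement `J`,
the result does not depend on the inputs of the players in `J`. -/
def IsNonSignalling {R S : Fin n → Type*} [∀ i, Fintype (S i)] [∀ i, DecidableEq (S i)]
    (C : (∀ i, S i) → (∀ i, R i) → ℝ) : Prop :=
  ∀ (I : Finset (Fin n)) (s₀ : ∀ i, S i) (r r' : ∀ i, R i),
    (∀ i ∈ I, r i = r' i) →
    (∑ s : ∀ i, S i, if ∀ i ∈ I, s i = s₀ i then C s r else 0) =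
      ∑ s : ∀ i, S i, if ∀ i ∈ I, s i = s₀ i then C s r' else 0

private lemma sum_indicator_const {S : Fin n → Type*} [∀ i, Fintype (S i)]
    [∀ i, DecidableEq (S i)] (I : Finset (Fin n)) (s : ∀ i, S i) :
    (∑ s₀ : ∀ i, S i, if ∀ i ∈ I, s i = s₀ i then (1:ℝ) else 0)
      = ∏ i, (if i ∈ I then (1:ℝ) else (Fintype.card (S i) : ℝ)) := by
  have h1 : ∀ s₀ : ∀ i, S i,
      (if ∀ i ∈ I, s i = s₀ i then (1:ℝ) else 0)
        = ∏ i, (if i ∈ I → s i = s₀ i then (1:ℝ) else 0) := by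
    intro s₀
    by_cases h : ∀ i ∈ I, s i = s₀ i
    · rw [if_pos h, eq_comm]
      exact Finset.prod_eq_one fun i _ => if_pos (fun hi => h i hi)
    · rw [if_neg h]
      push_neg at h
      obtain ⟨i, hi, hne⟩ := h
      exact (Finset.prod_eq_zero (Finset.mem_univ i) (by rw [if_neg]; tauto)).symm
  simp only [h1]
  rw [← Fintype.prod_sum fun i (v : S i) => (if i ∈ I → s i = v then (1:ℝ) else 0)]
  refine Finset.prod_congr rfl fun i _ => ?_
  by_cases hi : i ∈ I
  · rw [if_pos hi]
    have : ∀ v : S i, (if i ∈ I → s i = v then (1:ℝ) else 0) = if s i = v then 1 else 0 := by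
      intro v; by_cases hv : s i = v <;> simp [hv, hi]
    simp only [this]
    rw [Finset.sum_ite_eq Finset.univ (s i) (fun _ => (1:ℝ))]
    simp
  · rw [if_neg hi]
    have : ∀ v : S i, (if i ∈ I → s i = v then (1:ℝ) else 0) = 1 := by
      intro v; exact if_pos (fun h => absurd h hi)
    simp [this]

private lemma genNS {R S : Fin n → Type*} [∀ i, Fintype (S i)] [∀ i, DecidableEq (S i)]
    (C : (∀ i, S i) → (∀ i, R i) → ℝ) (hNS : IsNonSignalling C)
    (I : Finset (Fin n)) (h : (∀ i, S i) → ℝ)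
    (hh : ∀ s s', (∀ i ∈ I, s i = s' i) → h s = h s')
    (r r' : ∀ i, R i) (hr : ∀ i ∈ I, r i = r' i) :
    ∑ s, h s * C s r = ∑ s, h s * C s r' := by
  set N : ℝ := ∏ i, (if i ∈ I then (1:ℝ) else (Fintype.card (S i) : ℝ)) with hN
  have key : ∀ q : ∀ i, R i,
      N * ∑ s, h s * C s q
        = ∑ s₀ : ∀ i, S i, h s₀ * ∑ s : ∀ i, S i,
            (if ∀ i ∈ I, s i = s₀ i then C s q else 0) := by
    intro q
    have e : ∀ s₀ : ∀ i, S i,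
        h s₀ * ∑ s : ∀ i, S i, (if ∀ i ∈ I, s i = s₀ i then C s q else 0)
          = ∑ s : ∀ i, S i,
              (if ∀ i ∈ I, s i = s₀ i then (1:ℝ) else 0) * (h s * C s q) := by
      intro s₀
      rw [Finset.mul_sum]
      refine Finset.sum_congr rfl fun s _ => ?_
      by_cases hc : ∀ i ∈ I, s i = s₀ i
      · rw [if_pos hc, if_pos hc, one_mul, hh s₀ s (fun i hi => (hc i hi).symm)]
      · simp [hc]
    rw [eq_comm]
    simp only [e]
    rw [Finset.sum_comm, Finset.mul_sum]
    refine Finset.sum_congr rfl fun s _ => ?_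
    rw [← Finset.sum_mul, sum_indicator_const I s]
  have h2 : N * ∑ s, h s * C s r = N * ∑ s, h s * C s r' := by
    rw [key r, key r']
    exact Finset.sum_congr rfl fun s₀ _ => by rw [hNS I s₀ r r' hr]
  by_cases hN0 : N = 0
  · have : ∃ i, IsEmpty (S i) := by
      rw [hN, Finset.prod_eq_zero_iff] at hN0
      obtain ⟨i, -, hi⟩ := hN0
      by_cases hiI : i ∈ I
      · rw [if_pos hiI] at hi; norm_num at hi
      · rw [if_neg hiI] at hi
        exact ⟨i, Fintype.card_eq_zero_iff.mp (by exact_mod_cast hi)⟩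
    obtain ⟨i, hi⟩ := this
    have hE : IsEmpty (∀ i, S i) := ⟨fun s => hi.false (s i)⟩
    rw [Finset.univ_eq_empty, Finset.sum_empty, Finset.sum_empty]
  · exact mul_left_cancel₀ hN0 h2

/-- Non-signalling correlations are closed under local classical
pre- and post-processing: if `C` is a non-signalling correlation over inputs
`∀ i, R i` and outputs `∀ i, S i`, and each player `i` processes locally via a
distribution `p i` on `Λ i` and functions `f i : T i → Λ i → R i`,
`g i : T i → S i → Λ i → A i`, then the induced distribution
`P(a|t) = Σ_{λ,s} C(s|f(t,λ)) π(λ) [g(t,s,λ) = a]` is a non-signalling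
correlation over inputs `∀ i, T i` and outputs `∀ i, A i`. -/
theorem nonsignalling_closed_under_local_processing
    (T A R S Λ : Fin n → Type)
    [∀ i, Fintype (T i)] [∀ i, Fintype (A i)] [∀ i, DecidableEq (A i)]
    [∀ i, Fintype (R i)] [∀ i, Fintype (S i)] [∀ i, DecidableEq (S i)]
    [∀ i, Fintype (Λ i)]
    (C : (∀ i, S i) → (∀ i, R i) → ℝ)
    (hC0 : ∀ s r, 0 ≤ C s r) (hC1 : ∀ r, ∑ s, C s r = 1)
    (hNS : IsNonSignalling C)
    (p : ∀ i, Λ i → ℝ) (hp0 : ∀ i l, 0 ≤ p i l) (hp1 : ∀ i, ∑ l, p i l = 1)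
    (f : ∀ i, T i → Λ i → R i) (g : ∀ i, T i → S i → Λ i → A i)
    (P : (∀ i, A i) → (∀ i, T i) → ℝ)
    (hP : ∀ a t, P a t =
      ∑ l : ∀ i, Λ i, ∑ s : ∀ i, S i,
        C s (fun i => f i (t i) (l i)) * (∏ i, p i (l i)) *
          (if (fun i => g i (t i) (s i) (l i)) = a then 1 else 0)) :
    IsNonSignalling P := by
  intro I a₀ t t' ht
  simp only [hP]
  have step : ∀ τ : ∀ i, T i,
      (∑ a : ∀ i, A i, if ∀ i ∈ I, a i = a₀ i then
          (∑ l : ∀ i, Λ i, ∑ s : ∀ i, S i,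
            C s (fun i => f i (τ i) (l i)) * (∏ i, p i (l i)) *
              (if (fun i => g i (τ i) (s i) (l i)) = a then 1 else 0)) else 0)
        = ∑ l : ∀ i, Λ i, (∏ i, p i (l i)) *
            ∑ s : ∀ i, S i,
              (if ∀ i ∈ I, g i (τ i) (s i) (l i) = a₀ i then (1:ℝ) else 0) *
                C s (fun i => f i (τ i) (l i)) := by
    intro τ
    have e0 : ∀ (c : Prop) [Decidable c] (κ : Type) [Fintype κ] (F : κ → ℝ),
        (if c then ∑ x, F x else 0) = ∑ x, if c then F x else 0 := by
      intros c _ κ _ F; split <;> simp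
    simp only [e0]
    rw [Finset.sum_comm]
    refine Finset.sum_congr rfl fun l _ => ?_
    rw [Finset.sum_comm, Finset.mul_sum]
    refine Finset.sum_congr rfl fun s _ => ?_
    have e2 : ∀ a : ∀ i, A i,
        (if ∀ i ∈ I, a i = a₀ i then
            C s (fun i => f i (τ i) (l i)) * (∏ i, p i (l i)) *
              (if (fun i => g i (τ i) (s i) (l i)) = a then (1:ℝ) else 0) else 0)
          = if (fun i => g i (τ i) (s i) (l i)) = a then
              (if ∀ i ∈ I, a i = a₀ i then (1:ℝ) else 0) *
                (C s (fun i => f i (τ i) (l i)) * (∏ i, p i (l i))) else 0 := by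
      intro a
      by_cases hg : (fun i => g i (τ i) (s i) (l i)) = a
      · rw [if_pos hg, if_pos hg]
        by_cases hc : ∀ i ∈ I, a i = a₀ i
        · rw [if_pos hc, if_pos hc]; ring
        · rw [if_neg hc, if_neg hc]; ring
      · rw [if_neg hg, if_neg hg]
        by_cases hc : ∀ i ∈ I, a i = a₀ i
        · rw [if_pos hc]; ring
        · rw [if_neg hc]
    simp only [e2]
    rw [Finset.sum_ite_eq Finset.univ (fun i => g i (τ i) (s i) (l i))
      (fun a => (if ∀ i ∈ I, a i = a₀ i then (1:ℝ) else 0) *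
        (C s (fun i => f i (τ i) (l i)) * (∏ i, p i (l i))))]
    simp only [Finset.mem_univ, if_true]
    ring
  rw [step t, step t']
  refine Finset.sum_congr rfl fun l _ => ?_
  congr 1
  have hind : ∀ s : ∀ i, S i,
      (if ∀ i ∈ I, g i (t i) (s i) (l i) = a₀ i then (1:ℝ) else 0)
        = if ∀ i ∈ I, g i (t' i) (s i) (l i) = a₀ i then (1:ℝ) else 0 := by
    intro s
    have : (∀ i ∈ I, g i (t i) (s i) (l i) = a₀ i) ↔
        (∀ i ∈ I, g i (t' i) (s i) (l i) = a₀ i) :=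
      forall₂_congr fun i hi => by rw [ht i hi]
    simp only [this]
  simp only [hind]
  refine genNS C hNS I _ ?_ _ _ (fun i hi => by simp only [ht i hi])
  intro s s' hs
  have : (∀ i ∈ I, g i (t' i) (s i) (l i) = a₀ i) ↔
      (∀ i ∈ I, g i (t' i) (s' i) (l i) = a₀ i) :=
    forall₂_congr fun i hi => by rw [hs i hi]
  simp only [this]

end

end QG
end

section
/- If (f, g, π, C) is a Nash equilibrium for an n-player binary game G, then its canonical solution (id_T, id_A, P), where P is the distribution induced by (f, g, π, C), is also a Nash equilibrium for G. -/
open scoped BigOperators ComplexOrder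

namespace QG

noncomputable section

variable {n : ℕ}

lemma merge_self {α : Fin n → Type*} (i : Fin n) (x : α i)
    (y : ∀ j : {j : Fin n // j ≠ i}, α j.1) : merge i x y i = x := by
  unfold merge
  rw [dif_pos rfl]
  exact eq_of_heq (cast_heq _ _)

lemma merge_ne {α : Fin n → Type*} (i : Fin n) (x : α i)
    (y : ∀ j : {j : Fin n // j ≠ i}, α j.1) {j : Fin n} (h : j ≠ i) :
    merge i x y j = y ⟨j, h⟩ := by
  unfold merge
  rw [dif_neg h]

/-- Collapsing the sum over answers against the induced distribution. -/
lemma sum_mul_induced (sol : Solution n) (t : Fin n → Bool)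
    (F : (Fin n → Bool) → ℝ) :
    ∑ a, F a * sol.induced a t
      = ∑ l : ∀ j, sol.Λ j, ∑ s : ∀ j, sol.S j,
          F (fun j => sol.g j (t j) (s j) (l j)) *
            (sol.C s (fun j => sol.f j (t j) (l j)) * ∏ j, sol.pdist j (l j)) := by
  simp only [Solution.induced, Finset.mul_sum]
  rw [Finset.sum_comm]
  refine Finset.sum_congr rfl fun l _ => ?_
  rw [Finset.sum_comm]
  refine Finset.sum_congr rfl fun s _ => ?_
  rw [Finset.sum_eq_single (fun j => sol.g j (t j) (s j) (l j))]
  · simp [mul_assoc]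
  · intro a _ ha
    simp [Ne.symm ha]
  · simp

/-- Swapping a fixed mixing index with the integrated one. -/
lemma swap_sum {Λ : Fin n → Type*} [∀ j, Fintype (Λ j)] (i : Fin n)
    (p : ∀ j, Λ j → ℝ) (hp : ∑ li, p i li = 1)
    (B : Λ i → (∀ j, Λ j) → ℝ)
    (hB : ∀ li (l l' : ∀ j, Λ j), (∀ j, j ≠ i → l j = l' j) → B li l = B li l') :
    ∑ l : ∀ j, Λ j, B (l i) l * ∏ j, p j (l j)
      = ∑ li, p i li * ∑ l : ∀ j, Λ j, B li l * ∏ j, p j (l j) := by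
  have hL : ∑ l : ∀ j, Λ j, B (l i) l * ∏ j, p j (l j)
      = ∑ x : (Λ i) × (∀ j, Λ j), p i x.1 * (B (x.2 i) x.2 * ∏ j, p j (x.2 j)) := by
    rw [Fintype.sum_prod_type, ← Finset.sum_comm]
    refine Finset.sum_congr rfl fun l _ => ?_
    dsimp only
    rw [← Finset.sum_mul, hp, one_mul]
  have hR : ∑ li, p i li * ∑ l : ∀ j, Λ j, B li l * ∏ j, p j (l j)
      = ∑ x : (Λ i) × (∀ j, Λ j), p i x.1 * (B x.1 x.2 * ∏ j, p j (x.2 j)) := by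
    rw [Fintype.sum_prod_type]
    refine Finset.sum_congr rfl fun li _ => ?_
    rw [Finset.mul_sum]
  rw [hL, hR]
  refine Fintype.sum_bijective
    (fun x : (Λ i) × (∀ j, Λ j) => (x.2 i, Function.update x.2 i x.1))
    (Function.Involutive.bijective fun x => by simp [Function.update_idem])
    _ _ fun x => ?_
  obtain ⟨li, l⟩ := x
  dsimp only
  have hprod : ∏ j, p j (Function.update l i li j)
      = p i li * ∏ j ∈ Finset.univ.erase i, p j (l j) := by
    rw [← Finset.mul_prod_erase Finset.univ (fun j => p j (Function.update l i li j))
      (Finset.mem_univ i)]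
    rw [Function.update_self]
    congr 1
    refine Finset.prod_congr rfl fun j hj => ?_
    rw [Function.update_of_ne (Finset.mem_erase.1 hj).1]
  have hprod' : ∏ j, p j (l j) = p i (l i) * ∏ j ∈ Finset.univ.erase i, p j (l j) :=
    (Finset.mul_prod_erase Finset.univ (fun j => p j (l j)) (Finset.mem_univ i)).symm
  have hBB : B (l i) (Function.update l i li) = B (l i) l :=
    hB _ _ _ fun j hj => Function.update_of_ne hj _ _
  rw [hprod, hBB, hprod']
  ring

/-- If `(f, g, π, C)` is a Nash equilibrium for the `n`-player
binary game `G`, then its canonical solution `(id_T, id_A, P)`, where `P` is the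
induced distribution, is also a Nash equilibrium for `G`. -/
theorem canonical_of_nash (G : Game n) (sol : Solution n)
    (hNash : sol.IsNashEq G) : CanonicalNashEq G sol.induced := by
  intro i ti ri μ
  -- abbreviation for the "body" sum, for a fixed strategy index of player i
  set B : sol.Λ i → (∀ j, sol.Λ j) → ℝ := fun li l =>
    ∑ tm : ∀ _ : {j : Fin n // j ≠ i}, Bool, ∑ s : ∀ j, sol.S j,
      G.payoff i (mergeB i (μ ti (sol.g i ri (s i) li))
          (fun j => sol.g j.1 (tm j) (s j.1) (l j.1))) (mergeB i ti tm) *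
        sol.C s (merge i (sol.f i ri li) (fun j => sol.f j.1 (tm j) (l j.1))) *
        G.prior (mergeB i ti tm) with hBdef
  have hB : ∀ li (l l' : ∀ j, sol.Λ j), (∀ j, j ≠ i → l j = l' j) → B li l = B li l' := by
    intro li l l' h
    refine Finset.sum_congr rfl fun tm _ => Finset.sum_congr rfl fun s _ => ?_
    have h1 : (fun j : {j : Fin n // j ≠ i} => sol.g j.1 (tm j) (s j.1) (l j.1))
        = fun j => sol.g j.1 (tm j) (s j.1) (l' j.1) := funext fun j => by rw [h j.1 j.2]
    have h2 : (fun j : {j : Fin n // j ≠ i} => sol.f j.1 (tm j) (l j.1))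
        = fun j => sol.f j.1 (tm j) (l' j.1) := funext fun j => by rw [h j.1 j.2]
    rw [h1, h2]
  -- the left-hand side
  have hL : (∑ tm : ∀ _ : {j : Fin n // j ≠ i}, Bool, ∑ a : Fin n → Bool,
        G.payoff i a (mergeB i ti tm) * sol.induced a (mergeB i ti tm) *
          G.prior (mergeB i ti tm))
      = ∑ tm : ∀ _ : {j : Fin n // j ≠ i}, Bool, ∑ l : ∀ j, sol.Λ j, ∑ s : ∀ j, sol.S j,
          G.payoff i (fun j => sol.g j (mergeB i ti tm j) (s j) (l j)) (mergeB i ti tm) *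
            sol.C s (fun j => sol.f j (mergeB i ti tm j) (l j)) *
            G.prior (mergeB i ti tm) * ∏ j, sol.pdist j (l j) := by
    refine Finset.sum_congr rfl fun tm _ => ?_
    rw [← Finset.sum_mul, sum_mul_induced, Finset.sum_mul]
    refine Finset.sum_congr rfl fun l _ => ?_
    rw [Finset.sum_mul]
    exact Finset.sum_congr rfl fun s _ => by ring
  -- the right-hand side, rewritten through B
  have hR : (∑ tm : ∀ _ : {j : Fin n // j ≠ i}, Bool, ∑ a : Fin n → Bool,
        G.payoff i (Function.update a i (μ ti (a i))) (mergeB i ti tm) *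
          sol.induced a (mergeB i ri tm) * G.prior (mergeB i ti tm))
      = ∑ l : ∀ j, sol.Λ j, B (l i) l * ∏ j, sol.pdist j (l j) := by
    have step1 : ∀ tm : ∀ _ : {j : Fin n // j ≠ i}, Bool,
        (∑ a : Fin n → Bool,
          G.payoff i (Function.update a i (μ ti (a i))) (mergeB i ti tm) *
            sol.induced a (mergeB i ri tm) * G.prior (mergeB i ti tm))
        = ∑ l : ∀ j, sol.Λ j, ∑ s : ∀ j, sol.S j,
            (G.payoff i (mergeB i (μ ti (sol.g i ri (s i) (l i)))
                (fun j => sol.g j.1 (tm j) (s j.1) (l j.1))) (mergeB i ti tm) *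
              sol.C s (merge i (sol.f i ri (l i)) (fun j => sol.f j.1 (tm j) (l j.1))) *
              G.prior (mergeB i ti tm)) * ∏ j, sol.pdist j (l j) := by
      intro tm
      rw [← Finset.sum_mul,
        sum_mul_induced sol (mergeB i ri tm)
          (fun a => G.payoff i (Function.update a i (μ ti (a i))) (mergeB i ti tm)),
        Finset.sum_mul]
      refine Finset.sum_congr rfl fun l _ => ?_
      rw [Finset.sum_mul]
      refine Finset.sum_congr rfl fun s _ => ?_
      have hAup : Function.update (fun j => sol.g j (mergeB i ri tm j) (s j) (l j)) i
            (μ ti ((fun j => sol.g j (mergeB i ri tm j) (s j) (l j)) i))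
          = mergeB i (μ ti (sol.g i ri (s i) (l i)))
              (fun j => sol.g j.1 (tm j) (s j.1) (l j.1)) := by
        funext j
        rcases eq_or_ne j i with h | h
        · subst h
          simp [mergeB, merge_self]
        · simp [Function.update_of_ne h, mergeB, merge_ne _ _ _ h]
      have hCf : (fun j => sol.f j (mergeB i ri tm j) (l j))
          = merge i (sol.f i ri (l i)) (fun j => sol.f j.1 (tm j) (l j.1)) := by
        funext j
        rcases eq_or_ne j i with h | h
        · subst h
          rw [merge_self]
          simp [mergeB, merge_self]
        · rw [merge_ne _ _ _ h]
          simp [mergeB, merge_ne _ _ _ h]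
      rw [hAup, hCf]
      ring
    calc (∑ tm : ∀ _ : {j : Fin n // j ≠ i}, Bool, ∑ a : Fin n → Bool,
        G.payoff i (Function.update a i (μ ti (a i))) (mergeB i ti tm) *
          sol.induced a (mergeB i ri tm) * G.prior (mergeB i ti tm))
        = ∑ tm : ∀ _ : {j : Fin n // j ≠ i}, Bool, ∑ l : ∀ j, sol.Λ j, ∑ s : ∀ j, sol.S j,
            (G.payoff i (mergeB i (μ ti (sol.g i ri (s i) (l i)))
                (fun j => sol.g j.1 (tm j) (s j.1) (l j.1))) (mergeB i ti tm) *
              sol.C s (merge i (sol.f i ri (l i)) (fun j => sol.f j.1 (tm j) (l j.1))) *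
              G.prior (mergeB i ti tm)) * ∏ j, sol.pdist j (l j) :=
          Finset.sum_congr rfl fun tm _ => step1 tm
      _ = ∑ l : ∀ j, sol.Λ j, B (l i) l * ∏ j, sol.pdist j (l j) := by
          rw [Finset.sum_comm]
          refine Finset.sum_congr rfl fun l _ => ?_
          rw [hBdef]
          simp only [Finset.sum_mul]
  -- relating B to the Nash deviation payoffs
  have hBNash : ∀ li : sol.Λ i,
      (∑ l : ∀ j, sol.Λ j, B li l * ∏ j, sol.pdist j (l j))
      = ∑ tm : ∀ _ : {j : Fin n // j ≠ i}, Bool, ∑ l : ∀ j, sol.Λ j, ∑ s : ∀ j, sol.S j,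
          G.payoff i (mergeB i (μ ti (sol.g i ri (s i) li))
              (fun j => sol.g j.1 (tm j) (s j.1) (l j.1))) (mergeB i ti tm) *
            sol.C s (merge i (sol.f i ri li) (fun j => sol.f j.1 (tm j) (l j.1))) *
            G.prior (mergeB i ti tm) * ∏ j, sol.pdist j (l j) := by
    intro li
    rw [hBdef]
    simp only [Finset.sum_mul]
    rw [Finset.sum_comm]
  -- conclude
  rw [ge_iff_le, hL, hR,
    swap_sum i sol.pdist (sol.pdist_sum_one i) B hB]
  have hle : ∀ li : sol.Λ i,
      sol.pdist i li * (∑ l : ∀ j, sol.Λ j, B li l * ∏ j, sol.pdist j (l j))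
      ≤ sol.pdist i li *
        (∑ tm : ∀ _ : {j : Fin n // j ≠ i}, Bool, ∑ l : ∀ j, sol.Λ j, ∑ s : ∀ j, sol.S j,
          G.payoff i (fun j => sol.g j (mergeB i ti tm j) (s j) (l j)) (mergeB i ti tm) *
            sol.C s (fun j => sol.f j (mergeB i ti tm j) (l j)) *
            G.prior (mergeB i ti tm) * ∏ j, sol.pdist j (l j)) := by
    intro li
    refine mul_le_mul_of_nonneg_left ?_ (sol.pdist_nonneg i li)
    rw [hBNash li]
    exact hNash i ti (sol.f i ri li) (fun ti' si => μ ti' (sol.g i ri si li))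
  calc (∑ li, sol.pdist i li * ∑ l : ∀ j, sol.Λ j, B li l * ∏ j, sol.pdist j (l j))
      ≤ ∑ li, sol.pdist i li *
        (∑ tm : ∀ _ : {j : Fin n // j ≠ i}, Bool, ∑ l : ∀ j, sol.Λ j, ∑ s : ∀ j, sol.S j,
          G.payoff i (fun j => sol.g j (mergeB i ti tm j) (s j) (l j)) (mergeB i ti tm) *
            sol.C s (fun j => sol.f j (mergeB i ti tm j) (l j)) *
            G.prior (mergeB i ti tm) * ∏ j, sol.pdist j (l j)) :=
        Finset.sum_le_sum fun li _ => hle li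
    _ = _ := by rw [← Finset.sum_mul, sol.pdist_sum_one, one_mul]

end

end QG
end

section
/- The graph-state strategy for the NC(C3) games is pseudo-telepathic: letting |Φ⟩ = CZ^{(1,2)} CZ^{(2,3)} CZ^{(3,1)} |+⟩^{⊗3} and P(a|t) = |(⟨φ_{a_1|t_1}| ⊗ ⟨φ_{a_2|t_2}| ⊗ ⟨φ_{a_3|t_3}|) |Φ⟩|², where φ_{a|0} = |a⟩, φ_{0|1} = |+⟩, φ_{1|1} = |−⟩, the players win with probability 1: for every question t ∈ {100, 010, 001, 111} and every answer a ∈ {0,1}³ with (a,t) ∉ W, P(a|t) = 0; equivalently, for t ∈ {100, 010, 001}, P(a|t) > 0 implies a_1 ⊕ a_2 ⊕ a_3 = 0, and P(a|111) > 0 implies a_1 ⊕ a_2 ⊕ a_3 = 1. -/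
open scoped BigOperators

namespace QG

noncomputable section

def q100 : Fin 3 → Bool := ![true, false, false]
def q010 : Fin 3 → Bool := ![false, true, false]
def q001 : Fin 3 → Bool := ![false, false, true]
def q111 : Fin 3 → Bool := ![true, true, true]

/-- The set of valid questions of the `NC(C₃)` games. -/
def validQuestions : Finset (Fin 3 → Bool) := {q100, q010, q001, q111}

/-- The parity `a₁ ⊕ a₂ ⊕ a₃` of an answer. -/
def parity (a : Fin 3 → Bool) : Bool := xor (a 0) (xor (a 1) (a 2))

/-- The winning condition of the `NC(C₃)` games: on questions `100, 010, 001`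
the answer must have even parity, on `111` it must have odd parity. -/
def NC3win (a t : Fin 3 → Bool) : Prop :=
  ((t = q100 ∨ t = q010 ∨ t = q001) ∧ parity a = false) ∨ (t = q111 ∧ parity a = true)

instance : ∀ a t, Decidable (NC3win a t) := fun a t => by unfold NC3win; infer_instance

/-- The controlled-Z phase `(−1)^{x₁x₂ + x₂x₃ + x₃x₁}` of the composite of the
three gates `CZ^{(1,2)} CZ^{(2,3)} CZ^{(3,1)}` on a computational basis state `x`. -/
def czPhase (x : Fin 3 → Fin 2) : ℂ :=
  (-1) ^ ((x 0).val * (x 1).val + (x 1).val * (x 2).val + (x 2).val * (x 0).val)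

/-- The state `|+⟩ = (|0⟩ + |1⟩)/√2`. -/
def ketPlus : Fin 2 → ℂ := ![((1 / Real.sqrt 2 : ℝ) : ℂ), ((1 / Real.sqrt 2 : ℝ) : ℂ)]

/-- The state `|−⟩ = (|0⟩ − |1⟩)/√2`. -/
def ketMinus : Fin 2 → ℂ := ![((1 / Real.sqrt 2 : ℝ) : ℂ), (-(1 / Real.sqrt 2 : ℝ) : ℂ)]

/-- The graph state `|Φ⟩ = CZ^{(1,2)} CZ^{(2,3)} CZ^{(3,1)} |+⟩^{⊗3}`, expressed
by its components in the computational basis. -/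
def graphState (x : Fin 3 → Fin 2) : ℂ := czPhase x * ∏ i, ketPlus (x i)

/-- The measurement vector for output `a` on type `t`: `|a⟩` for `t = 0`, and
`|+⟩` or `|−⟩` for `t = 1` according to whether `a = 0` or `a = 1`. -/
def measVec (a t : Bool) : Fin 2 → ℂ :=
  match t, a with
  | false, false => ![1, 0]
  | false, true => ![0, 1]
  | true, false => ketPlus
  | true, true => ketMinus

/-- The correlation of the graph-state strategy:
`P(a|t) = |(⟨φ_{a₁|t₁}| ⊗ ⟨φ_{a₂|t₂}| ⊗ ⟨φ_{a₃|t₃}|) |Φ⟩|²`. -/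
def Pgraph (a t : Fin 3 → Bool) : ℝ :=
  ‖∑ x : Fin 3 → Fin 2,
      (∏ i, (starRingEnd ℂ) (measVec (a i) (t i) (x i))) * graphState x‖ ^ 2

def pi3Equiv : (Fin 3 → Fin 2) ≃ Fin 2 × Fin 2 × Fin 2 where
  toFun x := (x 0, x 1, x 2)
  invFun p := ![p.1, p.2.1, p.2.2]
  left_inv x := by ext i; fin_cases i <;> simp
  right_inv p := by simp

lemma sum_pi3 (f : (Fin 3 → Fin 2) → ℂ) :
    ∑ x, f x = ∑ p : Fin 2 × Fin 2 × Fin 2, f ![p.1, p.2.1, p.2.2] := by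
  refine Fintype.sum_equiv pi3Equiv f (fun p => f ![p.1, p.2.1, p.2.2]) (fun x => ?_)
  congr 1
  ext i; fin_cases i <;> rfl

lemma norm_sq_eq_zero {z : ℂ} (h : z = 0) : ‖z‖ ^ 2 = 0 := by simp [h]

set_option maxHeartbeats 2000000 in
/-- The graph-state strategy for the `NC(C₃)` games is
pseudo-telepathic: for every valid question `t` and every answer `a` that does
not satisfy the winning condition, `P(a|t) = 0`; i.e., the players win with
probability `1`. -/
theorem graph_state_strategy_pseudotelepathic :
    ∀ t ∈ validQuestions, ∀ a : Fin 3 → Bool, ¬ NC3win a t → Pgraph a t = 0 := by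
  intro t ht a
  have ha : a = ![a 0, a 1, a 2] := by ext i; fin_cases i <;> rfl
  rw [ha]
  simp only [validQuestions, Finset.mem_insert, Finset.mem_singleton] at ht
  generalize a 0 = b0
  generalize a 1 = b1
  generalize a 2 = b2
  rcases ht with rfl | rfl | rfl | rfl <;>
    rcases b0 <;> rcases b1 <;> rcases b2 <;> intro hna <;>
    first
      | exact absurd (by decide) hna
      | (rw [Pgraph, sum_pi3]
         exact norm_sq_eq_zero (by
           simp [Fintype.sum_prod_type, Fin.sum_univ_two, Fin.prod_univ_three,
             graphState, czPhase, ketPlus, ketMinus, measVec, q100, q010, q001, q111] <;> ring))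

end

end QG
end
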